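/- Let F_q be a finite field with q elements and let n ≥ 1 be such that every prime divisor of n divides q − 1 and such that 8 ∤ n or q ≢ 3 (mod 4). Set κ = gcd(n, q − 1) and m = n/κ. Then for every positive integer t, the number of distinct monic irreducible factors of x^n − 1 in F_q[x] of degree t equals φ(t)·κ/t if t divides m, and equals 0 otherwise, where φ is Euler's totient function. -/

import Mathlib

open Polynomial
lemma sq_sub_one_eq (q : ℕ) (hq : 1 ≤ q) : (q - 1) * (q + 1) = q ^ 2 - 1 := by
  rcases q with _ | q'
  · omega
  · simp only [Nat.add_sub_cancel]
    have h1 : q' * (q' + 1 + 1) = q' ^ 2 + 2 * q' := by ring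
    have h2 : (q' + 1) ^ 2 = q' ^ 2 + 2 * q' + 1 := by ring
    omega

lemma pow_mod_four_of_three (q s : ℕ) (hq : q % 4 = 3) :
    q ^ s % 4 = if s % 2 = 0 then 1 else 3 := by
  induction s with
  | zero => simp
  | succ s ih =>
    rw [pow_succ, Nat.mul_mod, ih, hq]
    rcases Nat.even_or_odd s with he | ho
    · have h0 : s % 2 = 0 := Nat.even_iff.mp he
      rw [if_pos h0, if_neg (by omega)]
    · have h1 : s % 2 = 1 := Nat.odd_iff.mp ho
      rw [if_neg (by omega), if_pos (by omega)]

/-- Key prime-power lemma (lifting the exponent style). -/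
lemma keyPrime {p q b e s : ℕ} (hp : p.Prime) (hq : 2 ≤ q) (hpq : p ∣ q - 1)
    (hb : b = (q - 1).factorization p)
    (hc : p ≠ 2 ∨ q % 4 ≠ 3 ∨ e ≤ 2) :
    p ^ e ∣ q ^ s - 1 ↔ p ^ (e - b) ∣ s := by
  rcases Nat.eq_zero_or_pos s with rfl | hs
  · simp
  have hq1' : q - 1 ≠ 0 := by omega
  have hqs : 2 ≤ q ^ s := le_trans hq (Nat.le_self_pow (by omega) q)
  have hqs0 : q ^ s - 1 ≠ 0 := by omega
  have hpb : p ^ b ∣ q - 1 := hb ▸ Nat.ordProj_dvd _ _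
  have hpnq : ¬ p ∣ q := by
    intro h
    have h1 : p ∣ q - (q - 1) := Nat.dvd_sub h hpq
    rw [show q - (q - 1) = 1 by omega] at h1
    exact hp.one_lt.ne' (Nat.dvd_one.mp h1)
  have hQdvd : q - 1 ∣ q ^ s - 1 := by
    simpa using Nat.sub_dvd_pow_sub_pow q 1 s
  rcases le_or_gt e b with heb | hbe
  · simp only [Nat.sub_eq_zero_of_le heb, pow_zero, one_dvd, iff_true]
    exact dvd_trans (pow_dvd_pow p heb) (dvd_trans hpb hQdvd)
  -- now b < e
  rcases hp.eq_two_or_odd' with rfl | hodd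
  · -- p = 2
    have hqodd : q % 2 = 1 := by
      rcases Nat.even_or_odd (q - 1) with he | ho
      · omega
      · exfalso; exact (Nat.not_even_iff_odd.mpr ho) (even_iff_two_dvd.mpr hpq)
    have hb1 : 1 ≤ b := by
      rw [hb]
      exact (Nat.Prime.factorization_pos_of_dvd Nat.prime_two hq1' hpq)
    rcases Nat.lt_or_ge (q % 4) 3 with hq4 | hq4
    · -- q % 4 = 1
      have hq41 : q % 4 = 1 := by omega
      have hb2 : 2 ≤ b := by
        rw [hb]
        refine (Nat.Prime.pow_dvd_iff_le_factorization Nat.prime_two hq1').mp ?_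
        have : (4 : ℕ) ∣ q - 1 := by omega
        simpa using this
      rcases Nat.even_or_odd s with hse | hso
      · -- s even : LTE for 2
        haveI : Fact (Nat.Prime 2) := ⟨Nat.prime_two⟩
        have hv := padicValNat.pow_two_sub_pow (x := q) (y := 1) (by omega)
          (by simpa using hpq) (by simpa using hpnq) (n := s) (by omega)
          (by simpa using hse)
        simp only [one_pow] at hv
        have hq1v : padicValNat 2 (q + 1) = 1 := by
          have h2 : (2:ℕ) ∣ q + 1 := by omega
          have h4 : ¬ (4:ℕ) ∣ q + 1 := by omega
          have hle : 1 ≤ (q + 1).factorization 2 :=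
            Nat.Prime.factorization_pos_of_dvd Nat.prime_two (by omega) h2
          have hlt : ¬ (2 ≤ (q + 1).factorization 2) := by
            intro hcon
            exact h4 (by
              have : (2:ℕ)^2 ∣ q + 1 :=
                (Nat.Prime.pow_dvd_iff_le_factorization Nat.prime_two (by omega)).mpr hcon
              simpa using this)
          rw [← Nat.factorization_def _ Nat.prime_two]
          omega
        rw [Nat.Prime.pow_dvd_iff_le_factorization Nat.prime_two hqs0,
          Nat.Prime.pow_dvd_iff_le_factorization Nat.prime_two (by omega),
          Nat.factorization_def _ Nat.prime_two, Nat.factorization_def _ Nat.prime_two]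
        rw [Nat.factorization_def _ Nat.prime_two] at hb
        omega
      · -- s odd
        have hrhs : ¬ 2 ^ (e - b) ∣ s := by
          intro hd
          have : (2:ℕ) ∣ s := dvd_trans (dvd_pow_self 2 (by omega : e - b ≠ 0)) hd
          exact (Nat.not_even_iff_odd.mpr hso) (even_iff_two_dvd.mpr this)
        have hlhs : ¬ 2 ^ e ∣ q ^ s - 1 := by
          intro hd
          have hM : (2:ℕ) ^ (b + 1) ∣ q ^ s - 1 := dvd_trans (pow_dvd_pow 2 (by omega)) hd
          set M := (2:ℕ) ^ (b + 1) with hMdef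
          have hM0 : 0 < M := Nat.pow_pos (by norm_num)
          have hsq : q ^ 2 ≡ 1 [MOD M] := by
            have hdvd : M ∣ q ^ 2 - 1 := by
              rw [← sq_sub_one_eq q (by omega)]
              exact mul_dvd_mul hpb (by omega)
            have := (Nat.modEq_iff_dvd' (by nlinarith : 1 ≤ q ^ 2)).mpr hdvd
            exact this.symm
          obtain ⟨k, hk⟩ := hso
          have hqs' : q ^ s ≡ q [MOD M] := by
            calc q ^ s = (q ^ 2) ^ k * q := by rw [hk, pow_succ, pow_mul]
            _ ≡ 1 ^ k * q [MOD M] := (hsq.pow k).mul_right q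
            _ = q := by ring
          have h1 : q ^ s ≡ 1 [MOD M] := ((Nat.modEq_iff_dvd' (by omega)).mpr hM).symm
          have hq1M : q ≡ 1 [MOD M] := hqs'.symm.trans h1
          have : M ∣ q - 1 := (Nat.modEq_iff_dvd' (by omega)).mp hq1M.symm
          exact Nat.pow_succ_factorization_not_dvd hq1' Nat.prime_two (hb ▸ this)
        exact iff_of_false hlhs hrhs
    · -- q % 4 = 3
      have hq43 : q % 4 = 3 := by omega
      have he2 : e ≤ 2 := by rcases hc with h | h | h <;> omega
      have hble : b ≤ 1 := by
        by_contra hcon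
        have : (2:ℕ)^2 ∣ q - 1 := dvd_trans (pow_dvd_pow 2 (by omega)) hpb
        have : (4:ℕ) ∣ q - 1 := by simpa using this
        omega
      have hb1' : b = 1 := by omega
      have he2' : e = 2 := by omega
      subst hb1' he2'
      have hmod := pow_mod_four_of_three q s hq43
      constructor
      · intro h4
        have h4' : (4:ℕ) ∣ q ^ s - 1 := by simpa using h4
        have hq1 : q ^ s % 4 = 1 := by omega
        rw [hmod] at hq1
        have hs2 : s % 2 = 0 := by
          by_contra h
          rw [if_neg h] at hq1; omega
        simpa using Nat.dvd_of_mod_eq_zero hs2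
      · intro h2
        have hs2 : s % 2 = 0 := by
          have : (2:ℕ) ∣ s := by simpa using h2
          omega
        have : q ^ s % 4 = 1 := by rw [hmod, if_pos hs2]
        have h4 : (4:ℕ) ∣ q ^ s - 1 := by omega
        simpa using h4
  · -- p odd
    haveI : Fact p.Prime := ⟨hp⟩
    have hv := padicValNat.pow_sub_pow (p := p) hodd (x := q) (y := 1) (by omega)
      (by simpa using hpq) (by simpa using hpnq) (n := s) (by omega)
    simp only [one_pow] at hv
    rw [Nat.Prime.pow_dvd_iff_le_factorization hp hqs0,
      Nat.Prime.pow_dvd_iff_le_factorization hp (by omega),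
      Nat.factorization_def _ hp, Nat.factorization_def _ hp]
    rw [Nat.factorization_def _ hp] at hb
    omega

/-- Lemma L: order of q modulo d. -/
lemma dvd_pow_sub_one_iff {q d : ℕ} (hq : 2 ≤ q) (hd : 0 < d)
    (hrad : ∀ p : ℕ, p.Prime → p ∣ d → p ∣ q - 1) (hc : ¬(8 ∣ d) ∨ q % 4 ≠ 3) (s : ℕ) :
    d ∣ q ^ s - 1 ↔ d / d.gcd (q - 1) ∣ s := by
  rcases Nat.eq_zero_or_pos s with rfl | hs
  · simp
  have hq1 : q - 1 ≠ 0 := by omega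
  have hd0 : d ≠ 0 := by omega
  have hg : d.gcd (q - 1) ∣ d := Nat.gcd_dvd_left _ _
  have hgd : d / d.gcd (q - 1) ∣ d := ⟨d.gcd (q - 1), (Nat.div_mul_cancel hg).symm⟩
  have hqs0 : q ^ s - 1 ≠ 0 := by
    have : 2 ≤ q ^ s := le_trans hq (Nat.le_self_pow (by omega) q)
    omega
  have hg0 : d.gcd (q - 1) ≠ 0 := fun h => hd0 (Nat.eq_zero_of_gcd_eq_zero_left h)
  have hd' : d / d.gcd (q - 1) ≠ 0 := by
    have := Nat.div_pos (Nat.le_of_dvd (by omega) hg) (by omega : 0 < d.gcd (q - 1))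
    omega
  rw [← Nat.factorization_le_iff_dvd hd0 hqs0, ← Nat.factorization_le_iff_dvd hd' (by omega),
    Finsupp.le_def, Finsupp.le_def]
  refine forall_congr' fun p => ?_
  by_cases hp : p.Prime
  · by_cases hpd : p ∣ d
    · have hpq := hrad p hp hpd
      have hE1 : (d / d.gcd (q - 1)).factorization p
          = d.factorization p - min (d.factorization p) ((q - 1).factorization p) := by
        rw [Nat.factorization_div hg, Finsupp.tsub_apply, Nat.factorization_gcd hd0 hq1,
          Finsupp.inf_apply]
      have hcp : p ≠ 2 ∨ q % 4 ≠ 3 ∨ d.factorization p ≤ 2 := by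
        rcases hc with h8 | h4
        · rcases eq_or_ne p 2 with rfl | hp2
          · right; right
            by_contra hcon
            exact h8 (by
              have : (2:ℕ) ^ 3 ∣ d :=
                dvd_trans (pow_dvd_pow 2 (by omega)) (Nat.ordProj_dvd d 2)
              simpa using this)
          · exact Or.inl hp2
        · exact Or.inr (Or.inl h4)
      have hkey := keyPrime (b := (q - 1).factorization p) (e := d.factorization p) (s := s)
        hp hq hpq rfl hcp
      rw [Nat.Prime.pow_dvd_iff_le_factorization hp hqs0,
        Nat.Prime.pow_dvd_iff_le_factorization hp (by omega)] at hkey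
      rw [hE1]
      rw [show d.factorization p - min (d.factorization p) ((q - 1).factorization p)
          = d.factorization p - (q - 1).factorization p by omega]
      exact hkey
    · have h1 : d.factorization p = 0 := Nat.factorization_eq_zero_of_not_dvd hpd
      have h2 : (d / d.gcd (q - 1)).factorization p = 0 :=
        Nat.factorization_eq_zero_of_not_dvd fun h => hpd (h.trans hgd)
      simp [h1, h2]
  · simp [Nat.factorization_eq_zero_of_not_prime _ hp]

/-- Lemma M. -/
lemma div_gcd_dvd_div_gcd {d n c : ℕ} (hn : n ≠ 0) (hc : c ≠ 0) (hdn : d ∣ n) :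
    d / d.gcd c ∣ n / n.gcd c := by
  have hd0 : d ≠ 0 := fun h => hn (by simpa [h] using hdn)
  have hgdd : d.gcd c ∣ d := Nat.gcd_dvd_left _ _
  have hgnn : n.gcd c ∣ n := Nat.gcd_dvd_left _ _
  have hd' : d / d.gcd c ≠ 0 := by
    have h0 : 0 < d.gcd c := Nat.gcd_pos_of_pos_left c (by omega)
    have := Nat.div_pos (Nat.le_of_dvd (by omega) hgdd) h0
    omega
  have hn' : n / n.gcd c ≠ 0 := by
    have h0 : 0 < n.gcd c := Nat.gcd_pos_of_pos_left c (by omega)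
    have := Nat.div_pos (Nat.le_of_dvd (by omega) hgnn) h0
    omega
  rw [← Nat.factorization_le_iff_dvd hd' hn', Finsupp.le_def]
  intro p
  have hda : d.factorization p ≤ n.factorization p :=
    Finsupp.le_def.mp ((Nat.factorization_le_iff_dvd hd0 hn).mpr hdn) p
  rw [Nat.factorization_div hgdd, Nat.factorization_div hgnn, Finsupp.tsub_apply,
    Finsupp.tsub_apply, Nat.factorization_gcd hd0 hc, Nat.factorization_gcd hn hc,
    Finsupp.inf_apply, Finsupp.inf_apply]
  show d.factorization p - min (d.factorization p) (c.factorization p)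
      ≤ n.factorization p - min (n.factorization p) (c.factorization p)
  omega

/-- totient multiplicative when all primes of ε divide t. -/
lemma totient_mul_of_primes_dvd : ∀ (ε t : ℕ), (∀ p : ℕ, p.Prime → p ∣ ε → p ∣ t) →
    Nat.totient (t * ε) = Nat.totient t * ε := by
  intro ε
  induction ε using Nat.strong_induction_on with
  | _ ε ih =>
    intro t hprimes
    rcases Nat.eq_zero_or_pos ε with rfl | hε
    · simp
    rcases eq_or_lt_of_le (show 1 ≤ ε from hε) with h1 | h2
    · simp [← h1]
    obtain ⟨P, hP⟩ : ∃ P, P = ε.minFac := ⟨_, rfl⟩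
    have hpm : P.Prime := hP ▸ Nat.minFac_prime (by omega)
    have hpd : P ∣ ε := hP ▸ Nat.minFac_dvd ε
    obtain ⟨ε', hε'⟩ := hpd
    have hpt : P ∣ t := hprimes _ hpm (hε' ▸ Dvd.intro ε' rfl)
    have hε'0 : ε' ≠ 0 := by rintro rfl; omega
    have hε'lt : ε' < ε := by
      have h2 := hpm.two_le
      have h3 := Nat.pos_of_ne_zero hε'0
      nlinarith [hε'.ge]
    have hstep : Nat.totient (t * ε) = P * Nat.totient (t * ε') := by
      rw [hε', show t * (P * ε') = P * (t * ε') by ring]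
      exact Nat.totient_mul_of_prime_of_dvd hpm (Dvd.dvd.mul_right hpt ε')
    rw [hstep, ih ε' hε'lt t (fun p hp hpε' => hprimes p hp (hε' ▸ hpε'.mul_left _)), hε']
    ring

/-- Lemma C (upper bound): sum of totients over divisors with given "level". -/
lemma totient_sum_le {q n t : ℕ} (hq : 2 ≤ q) (hn : 0 < n) (ht : 0 < t) :
    ∑ d ∈ n.divisors.filter (fun d => d / d.gcd (q - 1) = t), Nat.totient d
      ≤ Nat.totient t * Nat.gcd n (q - 1) := by
  classical
  have hq1 : q - 1 ≠ 0 := by omega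
  have hn0 : n ≠ 0 := by omega
  have ht0 : t ≠ 0 := by omega
  set κ := n.gcd (q - 1) with hκ
  have hκ0 : κ ≠ 0 := fun h => hn0 (Nat.eq_zero_of_gcd_eq_zero_left h)
  set ε := κ.gcd (t ^ κ) with hεdef
  have hεκ : ε ∣ κ := Nat.gcd_dvd_left _ _
  have hε0 : ε ≠ 0 := fun h => hκ0 (Nat.eq_zero_of_gcd_eq_zero_left h)
  set K' := κ / ε with hK'def
  have hεK' : ε * K' = κ := Nat.mul_div_cancel' hεκ
  have hK'0 : K' ≠ 0 := fun h => hκ0 (by rw [← hεK', h, mul_zero])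
  have htε0 : t * ε ≠ 0 := mul_ne_zero ht0 hε0
  -- primes of ε divide t
  have hεt : ∀ p : ℕ, p.Prime → p ∣ ε → p ∣ t := fun p hp hpε =>
    hp.dvd_of_dvd_pow (hpε.trans (Nat.gcd_dvd_right _ _))
  -- for p prime dividing t : ε carries the full p-part of κ
  have hfull : ∀ p : ℕ, p.Prime → p ∣ t → ε.factorization p = κ.factorization p := by
    intro p hp hpt
    have hvt : 1 ≤ t.factorization p := hp.factorization_pos_of_dvd ht0 hpt
    have hκlt : κ.factorization p < κ := Nat.factorization_lt p hκ0
    rw [hεdef, Nat.factorization_gcd hκ0 (pow_ne_zero _ ht0), Finsupp.inf_apply,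
      Nat.factorization_pow, Finsupp.smul_apply]
    have : κ.factorization p ≤ κ * t.factorization p := by
      calc κ.factorization p ≤ κ := le_of_lt hκlt
      _ ≤ κ * t.factorization p := Nat.le_mul_of_pos_right κ hvt
    simp only [smul_eq_mul]
    omega
  -- K' is coprime to t (hence to ε)
  have hK'fact : ∀ p : ℕ, p.Prime → p ∣ t → ¬ p ∣ K' := by
    intro p hp hpt hpK'
    have h2 : K'.factorization p = 0 := by
      rw [hK'def, Nat.factorization_div hεκ, Finsupp.tsub_apply, hfull p hp hpt]
      omega
    have h3 := hp.factorization_pos_of_dvd hK'0 hpK'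
    omega
  have htK' : Nat.Coprime t K' := by
    by_contra hcop
    have hg1 : 2 ≤ (t.gcd K') := by
      have h0 : t.gcd K' ≠ 0 := fun h => ht0 (Nat.eq_zero_of_gcd_eq_zero_left h)
      rcases Nat.lt_or_ge (t.gcd K') 2 with h | h
      · interval_cases h' : t.gcd K'
        · omega
        · exact absurd h' hcop
      · exact h
    set g := t.gcd K'
    have hpm : g.minFac.Prime := Nat.minFac_prime (by omega)
    exact hK'fact _ hpm ((Nat.minFac_dvd g).trans (Nat.gcd_dvd_left _ _))
      ((Nat.minFac_dvd g).trans (Nat.gcd_dvd_right _ _))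
  have hεK'cop : Nat.Coprime ε K' := by
    by_contra hcop
    have h0 : ε.gcd K' ≠ 0 := fun h => hε0 (Nat.eq_zero_of_gcd_eq_zero_left h)
    have hg1 : 2 ≤ (ε.gcd K') := by
      rcases Nat.lt_or_ge (ε.gcd K') 2 with h | h
      · interval_cases h' : ε.gcd K'
        · omega
        · exact absurd h' hcop
      · exact h
    set g := ε.gcd K'
    have hpm : g.minFac.Prime := Nat.minFac_prime (by omega)
    exact hK'fact _ hpm (hεt _ hpm ((Nat.minFac_dvd g).trans (Nat.gcd_dvd_left _ _)))
      ((Nat.minFac_dvd g).trans (Nat.gcd_dvd_right _ _))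
  set D := n.divisors.filter (fun d => d / d.gcd (q - 1) = t) with hD
  -- key structural fact for d ∈ D
  have key : ∀ d ∈ D, (t * ε) ∣ d ∧ d / (t * ε) ∣ K' := by
    intro d hdD
    rw [hD, Finset.mem_filter, Nat.mem_divisors] at hdD
    obtain ⟨⟨hdn, -⟩, hcond⟩ := hdD
    have hd0 : d ≠ 0 := fun h => hn0 (by simpa [h] using hdn)
    have hgdvd : d.gcd (q - 1) ∣ d := Nat.gcd_dvd_left _ _
    have E1 : ∀ p : ℕ, t.factorization p
        = d.factorization p - min (d.factorization p) ((q - 1).factorization p) := by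
      intro p
      rw [← hcond, Nat.factorization_div hgdvd, Finsupp.tsub_apply,
        Nat.factorization_gcd hd0 hq1, Finsupp.inf_apply]
    have E2 : ∀ p : ℕ, d.factorization p ≤ n.factorization p := fun p =>
      Finsupp.le_def.mp ((Nat.factorization_le_iff_dvd hd0 hn0).mpr hdn) p
    have E3 : ∀ p : ℕ, κ.factorization p
        = min (n.factorization p) ((q - 1).factorization p) := by
      intro p
      rw [hκ, Nat.factorization_gcd hn0 hq1, Finsupp.inf_apply]
    have E4 : ∀ p : ℕ, t.factorization p = 0 → ε.factorization p = 0 := by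
      intro p hvt
      rw [hεdef, Nat.factorization_gcd hκ0 (pow_ne_zero _ ht0), Finsupp.inf_apply,
        Nat.factorization_pow, Finsupp.smul_apply, smul_eq_mul, hvt, mul_zero]
      simp
    have E5 : ∀ p : ℕ, p.Prime → 1 ≤ t.factorization p →
        ε.factorization p = κ.factorization p := by
      intro p hp hvt
      exact hfull p hp (dvd_trans (dvd_pow_self p (by omega : t.factorization p ≠ 0))
        (Nat.ordProj_dvd t p))
    have ha : (t * ε) ∣ d := by
      rw [← Nat.factorization_le_iff_dvd htε0 hd0, Finsupp.le_def]
      intro p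
      by_cases hp : p.Prime
      · rw [Nat.factorization_mul ht0 hε0, Finsupp.add_apply]
        have e1 := E1 p; have e2 := E2 p; have e3 := E3 p
        rcases Nat.eq_zero_or_pos (t.factorization p) with hvt | hvt
        · have e4 := E4 p hvt
          omega
        · have e5 := E5 p hp hvt
          omega
      · simp [Nat.factorization_eq_zero_of_not_prime _ hp]
    refine ⟨ha, ?_⟩
    have hdtε0 : d / (t * ε) ≠ 0 := by
      have h0 : 0 < t * ε := by omega
      have := Nat.div_pos (Nat.le_of_dvd (by omega) ha) h0
      omega
    rw [← Nat.factorization_le_iff_dvd hdtε0 hK'0, Finsupp.le_def]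
    intro p
    by_cases hp : p.Prime
    · rw [Nat.factorization_div ha, Finsupp.tsub_apply, Nat.factorization_mul ht0 hε0,
        Finsupp.add_apply, hK'def, Nat.factorization_div hεκ, Finsupp.tsub_apply]
      have e1 := E1 p; have e2 := E2 p; have e3 := E3 p
      rcases Nat.eq_zero_or_pos (t.factorization p) with hvt | hvt
      · have e4 := E4 p hvt
        omega
      · have e5 := E5 p hp hvt
        omega
    · simp [Nat.factorization_eq_zero_of_not_prime _ hp]
  -- now the sum manipulation
  have hinj : ∀ x ∈ D, ∀ y ∈ D, x / (t * ε) = y / (t * ε) → x = y := by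
    intro x hx y hy hxy
    obtain ⟨hx1, -⟩ := key x hx
    obtain ⟨hy1, -⟩ := key y hy
    rw [← Nat.div_mul_cancel hx1, ← Nat.div_mul_cancel hy1, hxy]
  calc ∑ d ∈ D, Nat.totient d
      = ∑ d ∈ D, Nat.totient ((t * ε) * (d / (t * ε))) := by
        refine Finset.sum_congr rfl fun d hd => ?_
        rw [Nat.mul_div_cancel' (key d hd).1]
    _ = ∑ c ∈ D.image (fun d => d / (t * ε)), Nat.totient ((t * ε) * c) := by
        rw [Finset.sum_image hinj]
    _ ≤ ∑ c ∈ K'.divisors, Nat.totient ((t * ε) * c) := by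
        refine Finset.sum_le_sum_of_subset ?_
        intro c hc
        rw [Finset.mem_image] at hc
        obtain ⟨d, hd, rfl⟩ := hc
        exact Nat.mem_divisors.mpr ⟨(key d hd).2, hK'0⟩
    _ = ∑ c ∈ K'.divisors, Nat.totient (t * ε) * Nat.totient c := by
        refine Finset.sum_congr rfl fun c hc => ?_
        refine Nat.totient_mul ?_
        exact Nat.Coprime.mul (htK'.coprime_dvd_right (Nat.dvd_of_mem_divisors hc))
          (hεK'cop.coprime_dvd_right (Nat.dvd_of_mem_divisors hc))
    _ = Nat.totient (t * ε) * K' := by rw [← Finset.mul_sum, Nat.sum_totient]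
    _ = Nat.totient t * ε * K' := by rw [totient_mul_of_primes_dvd ε t hεt]
    _ = Nat.totient t * κ := by rw [mul_assoc, hεK']


lemma natDegree_eq_of_dvd_cyclotomic (F : Type) [Field F] [Fintype F] {q n d : ℕ}
    (hq : Fintype.card F = q)
    (hrad : ∀ p : ℕ, p.Prime → p ∣ n → p ∣ q - 1)
    (hcase : ¬(8 ∣ n) ∨ q % 4 ≠ 3)
    (hd : 0 < d) (hdn : d ∣ n)
    (hLiff : ∀ s : ℕ, d ∣ q ^ s - 1 ↔ d / d.gcd (q - 1) ∣ s)
    {f : F[X]} (hf : Irreducible f) (hfd : f ∣ cyclotomic d F) :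
    f.natDegree = d / d.gcd (q - 1) := by
  have hq2 : 2 ≤ q := hq ▸ Fintype.one_lt_card
  have hradd : ∀ p : ℕ, p.Prime → p ∣ d → p ∣ q - 1 := fun p hp hpd =>
    hrad p hp (hpd.trans hdn)
  haveI : Fact (Irreducible f) := ⟨hf⟩
  have hf0 : f ≠ 0 := hf.ne_zero
  set t := f.natDegree with htdef
  have ht : 0 < t := hf.natDegree_pos
  set K := AdjoinRoot f with hK
  let pb := AdjoinRoot.powerBasis hf0
  haveI : Finite K := Finite.of_equiv _ pb.basis.equivFun.symm.toEquiv
  haveI : Fintype K := Fintype.ofFinite K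
  have hcardK : Fintype.card K = q ^ t := by
    rw [Module.card_eq_pow_finrank (K := F) (V := K), hq, pb.finrank,
      AdjoinRoot.powerBasis_dim]
  set α := AdjoinRoot.root f with hα
  have hαc : IsRoot (cyclotomic d K) α := by
    have h1 : (aeval α) (cyclotomic d F) = 0 := by
      rw [hα, AdjoinRoot.aeval_eq, AdjoinRoot.mk_eq_zero]
      exact hfd
    rw [IsRoot, ← map_cyclotomic d (algebraMap F K), eval_map, ← aeval_def]
    exact h1
  -- characteristic
  set p₀ := ringChar F with hp₀
  have hp₀' : p₀.Prime := CharP.char_is_prime F p₀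
  haveI : Fact p₀.Prime := ⟨hp₀'⟩
  haveI hKchar : CharP K p₀ := charP_of_injective_algebraMap (algebraMap F K).injective p₀
  obtain ⟨jp, -, hjp⟩ := FiniteField.card F p₀
  have hqj : q = p₀ ^ (jp : ℕ) := by rw [← hq, hjp]
  have hp₀d : ¬ p₀ ∣ d := by
    intro h
    have h1 : p₀ ∣ q - 1 := hradd p₀ hp₀' h
    have h2 : p₀ ∣ q := hqj ▸ dvd_pow_self p₀ (by exact_mod_cast jp.ne_zero)
    have h3 : p₀ ∣ q - (q - 1) := Nat.dvd_sub h2 h1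
    rw [show q - (q - 1) = 1 by omega] at h3
    exact hp₀'.one_lt.ne' (Nat.dvd_one.mp h3)
  haveI : NeZero (d : K) := NeZero.of_not_dvd K hp₀d
  have hprim : IsPrimitiveRoot α d := isRoot_cyclotomic_iff.mp hαc
  have hα0 : α ≠ 0 := by
    intro h
    have := hprim.pow_eq_one
    rw [h, zero_pow (by omega : d ≠ 0)] at this
    exact zero_ne_one this
  have hpowroot : ∀ s : ℕ, d ∣ q ^ s - 1 → α ^ q ^ s = α := by
    intro s hs
    have hq1s : 1 ≤ q ^ s := Nat.one_le_pow _ _ (by omega)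
    have h1 : α ^ (q ^ s - 1) = 1 := (hprim.pow_eq_one_iff_dvd _).mpr hs
    rw [show q ^ s = (q ^ s - 1) + 1 by omega, pow_succ, h1, one_mul]
  -- d ∣ q ^ t - 1
  have hdq : d ∣ q ^ t - 1 := by
    have hcard : α ^ q ^ t = α := by rw [← hcardK]; exact FiniteField.pow_card α
    have hq1t : 1 ≤ q ^ t := Nat.one_le_pow _ _ (by omega)
    have h1 : α ^ (q ^ t - 1) * α = 1 * α := by
      rw [one_mul, ← pow_succ, show (q ^ t - 1) + 1 = q ^ t by omega, hcard]
    exact (hprim.pow_eq_one_iff_dvd _).mp (mul_right_cancel₀ hα0 h1)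
  set r := d / d.gcd (q - 1) with hrdef
  have hrt : r ∣ t := (hLiff t).mp hdq
  have hr0 : 0 < r := Nat.pos_of_ne_zero (by
    intro h
    rw [h] at hrt
    exact ht.ne' (Nat.eq_zero_of_zero_dvd hrt ▸ rfl))
  have hαr : α ^ q ^ r = α := hpowroot r ((hLiff r).mpr dvd_rfl)
  -- the fixed-point subalgebra argument : t ≤ r
  haveI : ExpChar K p₀ := ExpChar.prime hp₀'
  set m₀ := (jp : ℕ) * r with hm₀
  have hqr : q ^ r = p₀ ^ m₀ := by rw [hqj, ← pow_mul]
  set ψ := iterateFrobenius K p₀ m₀ with hψdef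
  have hψ : ∀ x : K, ψ x = x ^ q ^ r := fun x => by
    rw [hψdef, iterateFrobenius_def, ← hqr]
  have halg : ∀ x : F, ψ (algebraMap F K x) = algebraMap F K x := by
    intro x
    rw [hψ, ← map_pow]
    congr 1
    calc x ^ q ^ r = x ^ (Fintype.card F) ^ r := by rw [hq]
    _ = x := FiniteField.pow_card_pow r x
  let A : Subalgebra F K :=
    { (RingHom.eqLocus ψ (RingHom.id K)).toSubsemiring with
      algebraMap_mem' := fun x => show ψ _ = _ from halg x }
  have htop : ∀ x : K, x ^ q ^ r = x := by
    have h1 : Algebra.adjoin F {α} ≤ A := by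
      refine Algebra.adjoin_le ?_
      intro y hy
      rw [Set.mem_singleton_iff] at hy
      subst hy
      show ψ α = α
      rw [hψ]; exact hαr
    rw [AdjoinRoot.adjoinRoot_eq_top] at h1
    intro x
    have hx : x ∈ A := h1 Algebra.mem_top
    have : ψ x = x := hx
    rwa [hψ] at this
  have hPne : (X ^ q ^ r - X : K[X]) ≠ 0 :=
    FiniteField.X_pow_card_pow_sub_X_ne_zero K (by omega) hq2
  have hsub : (Finset.univ : Finset K) ⊆ (X ^ q ^ r - X : K[X]).roots.toFinset := by
    intro x _
    rw [Multiset.mem_toFinset, mem_roots hPne]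
    show eval x (X ^ q ^ r - X) = 0
    simp [htop x]
  have hle : Fintype.card K ≤ q ^ r := by
    calc Fintype.card K = (Finset.univ : Finset K).card := rfl
    _ ≤ (X ^ q ^ r - X : K[X]).roots.toFinset.card := Finset.card_le_card hsub
    _ ≤ Multiset.card (X ^ q ^ r - X : K[X]).roots := Multiset.toFinset_card_le _
    _ ≤ (X ^ q ^ r - X : K[X]).natDegree := card_roots' _
    _ = q ^ r := FiniteField.X_pow_card_pow_sub_X_natDegree_eq K (by omega) hq2
  have htle : t ≤ r := by
    rw [hcardK] at hle
    exact (Nat.pow_le_pow_iff_right hq2).mp hle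
  exact le_antisymm htle (Nat.le_of_dvd ht hrt)


/-- if every prime divisor of `n` divides `q - 1` and (`8 ∤ n` or
`q ≢ 3 (mod 4)`), then with `κ = gcd(n,q-1)` and `m = n/κ`, for every `t ≥ 1` the
number of distinct monic irreducible factors of `X^n - 1` of degree `t` is
`φ(t)·κ/t` if `t ∣ m` and `0` otherwise. -/
theorem stmt_12 (F : Type) [Field F] [Fintype F] (q n : ℕ)
    (hq : Fintype.card F = q) (hn : 1 ≤ n)
    (hrad : ∀ p : ℕ, p.Prime → p ∣ n → p ∣ q - 1)
    (hcase : ¬(8 ∣ n) ∨ q % 4 ≠ 3)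
    (κ m : ℕ) (hκ : κ = Nat.gcd n (q - 1)) (hm : m = n / κ) :
    ∀ t : ℕ, 1 ≤ t →
      {f : F[X] | f.Monic ∧ Irreducible f ∧ f ∣ X ^ n - 1 ∧ f.natDegree = t}.ncard =
        if t ∣ m then Nat.totient t * κ / t else 0 := by
  intro t ht
  classical
  have hq2 : 2 ≤ q := hq ▸ Fintype.one_lt_card
  have hn0 : n ≠ 0 := by omega
  have hp₀' : (ringChar F).Prime := CharP.char_is_prime F _
  have hcharn : (n : F) ≠ 0 := by
    rw [Ne, CharP.cast_eq_zero_iff F (ringChar F)]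
    intro hdvd
    have h1 := hrad _ hp₀' hdvd
    obtain ⟨jp, -, hjp⟩ := FiniteField.card F (ringChar F)
    have h2 : ringChar F ∣ q := by
      rw [← hq, hjp]; exact dvd_pow_self _ (by exact_mod_cast jp.ne_zero)
    have h3 : ringChar F ∣ 1 := by
      have := Nat.dvd_sub h2 h1
      rwa [show q - (q - 1) = 1 by omega] at this
    exact hp₀'.one_lt.ne' (Nat.dvd_one.mp h3)
  -- basic facts about X^n - 1
  set P : F[X] := X ^ n - 1 with hP
  have hPC : P = X ^ n - C 1 := by rw [hP, map_one]
  have hPmonic : P.Monic := by rw [hPC]; exact monic_X_pow_sub_C (1 : F) hn0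
  have hP0 : P ≠ 0 := hPmonic.ne_zero
  have hPdeg : P.natDegree = n := by rw [hPC]; exact natDegree_X_pow_sub_C
  have hPsf : Squarefree P := by
    rw [hPC]; exact (separable_X_pow_sub_C (1 : F) hcharn one_ne_zero).squarefree
  -- the finset of monic irreducible factors
  set M := UniqueFactorizationMonoid.normalizedFactors P with hM
  have hnodup : M.Nodup :=
    (UniqueFactorizationMonoid.squarefree_iff_nodup_normalizedFactors hP0).mp hPsf
  set S : Finset F[X] := M.toFinset with hS
  have hSval : S.val = M := by
    rw [hS, Multiset.toFinset_val, hnodup.dedup]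
  have hmem : ∀ g : F[X], g ∈ S ↔ g.Monic ∧ Irreducible g ∧ g ∣ P := by
    intro g
    rw [hS, Multiset.mem_toFinset, hM]
    constructor
    · intro hg
      have hirr := UniqueFactorizationMonoid.irreducible_of_normalized_factor g hg
      have hnorm := UniqueFactorizationMonoid.normalize_normalized_factor g hg
      have hdvd := UniqueFactorizationMonoid.dvd_of_mem_normalizedFactors hg
      have hmon : g.Monic := by
        rw [← hnorm]; exact monic_normalize hirr.ne_zero
      exact ⟨hmon, hirr, hdvd⟩
    · rintro ⟨hmon, hirr, hdvd⟩
      obtain ⟨g', hg', hassoc⟩ :=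
        UniqueFactorizationMonoid.exists_mem_normalizedFactors_of_dvd hP0 hirr hdvd
      have hg'mon : g'.Monic := by
        rw [← UniqueFactorizationMonoid.normalize_normalized_factor g' hg']
        exact monic_normalize
          (UniqueFactorizationMonoid.irreducible_of_normalized_factor g' hg').ne_zero
      rwa [eq_of_monic_of_associated hmon hg'mon hassoc]
  have hprodS : ∏ g ∈ S, g = P := by
    have hSM : ∏ g ∈ S, g = M.prod := by
      rw [Finset.prod_eq_multiset_prod, hSval, Multiset.map_id']
    have h1 : Associated (∏ g ∈ S, g) P := by
      rw [hSM]; exact UniqueFactorizationMonoid.prod_normalizedFactors hP0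
    exact eq_of_monic_of_associated
      (monic_prod_of_monic _ _ fun g hg => ((hmem g).mp hg).1) hPmonic h1
  -- fibers by degree
  set A : ℕ → Finset F[X] := fun s => S.filter (fun g => g.natDegree = s) with hA
  have hset : {f : F[X] | f.Monic ∧ Irreducible f ∧ f ∣ X ^ n - 1 ∧ f.natDegree = t}
      = ↑(A t) := by
    ext g
    simp only [Set.mem_setOf_eq, hA, Finset.coe_filter, Set.mem_setOf_eq, hmem g]
    tauto
  rw [hset, Set.ncard_coe_finset]
  -- level iff
  have hLiffd : ∀ d, 0 < d → d ∣ n → ∀ s, (d ∣ q ^ s - 1 ↔ d / d.gcd (q - 1) ∣ s) := by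
    intro d hd hdn s
    refine dvd_pow_sub_one_iff hq2 hd (fun p hp hpd => hrad p hp (hpd.trans hdn)) ?_ s
    rcases hcase with h | h
    · exact Or.inl fun h8 => h (h8.trans hdn)
    · exact Or.inr h
  have hcyclo : ∀ d, 0 < d → d ∣ n → ∀ g : F[X], Irreducible g → g ∣ cyclotomic d F →
      g.natDegree = d / d.gcd (q - 1) := fun d hd hdn g hg hgd =>
    natDegree_eq_of_dvd_cyclotomic F hq hrad hcase hd hdn (hLiffd d hd hdn) hg hgd
  have hdegdvd : ∀ g ∈ S, ∃ d ∈ n.divisors, d / d.gcd (q - 1) = g.natDegree := by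
    intro g hg
    obtain ⟨hmon, hirr, hdvd⟩ := (hmem g).mp hg
    have hdvd' : g ∣ ∏ d ∈ n.divisors, cyclotomic d F := by
      rwa [prod_cyclotomic_eq_X_pow_sub_one (by omega) F]
    obtain ⟨d, hdmem, hgd⟩ :=
      (UniqueFactorizationMonoid.irreducible_iff_prime.mp hirr).exists_mem_finset_dvd hdvd'
    have hd0 : 0 < d := Nat.pos_of_mem_divisors hdmem
    have hdn : d ∣ n := (Nat.mem_divisors.mp hdmem).1
    exact ⟨d, hdmem, (hcyclo d hd0 hdn g hirr hgd).symm⟩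
  -- m and κ facts
  have hκ0 : κ ≠ 0 := by
    rw [hκ]; exact fun h => hn0 (Nat.eq_zero_of_gcd_eq_zero_left h)
  have hκn : κ ∣ n := hκ ▸ Nat.gcd_dvd_left _ _
  have hmκ : κ * m = n := by rw [hm]; exact Nat.mul_div_cancel' hκn
  have hm0 : m ≠ 0 := fun h => hn0 (by rw [← hmκ, h, mul_zero])
  have hdegm : ∀ g ∈ S, g.natDegree ∣ m := by
    intro g hg
    obtain ⟨d, hdmem, hdeq⟩ := hdegdvd g hg
    rw [← hdeq, hm, hκ]
    exact div_gcd_dvd_div_gcd hn0 (by omega : q - 1 ≠ 0) (Nat.mem_divisors.mp hdmem).1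
  by_cases htm : t ∣ m
  swap
  · rw [if_neg htm]
    have hempty : A t = ∅ := by
      refine Finset.filter_eq_empty_iff.mpr fun {g} hg hdeg => htm ?_
      rw [← hdeg]
      exact hdegm g hg
    simp [hempty]
  · rw [if_pos htm]
    -- total degree sum
    have hsum1 : ∑ s ∈ m.divisors, s * (A s).card = n := by
      have h1 : ∑ g ∈ S, g.natDegree = n := by
        rw [← hPdeg, ← hprodS]
        exact (natDegree_prod _ _ fun g hg => ((hmem g).mp hg).2.1.ne_zero).symm
      calc ∑ s ∈ m.divisors, s * (A s).card
          = ∑ s ∈ m.divisors, ∑ g ∈ A s, g.natDegree := by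
            refine Finset.sum_congr rfl fun s hs => ?_
            rw [Finset.sum_congr rfl (fun g hg => (Finset.mem_filter.mp hg).2),
              Finset.sum_const, smul_eq_mul, mul_comm]
        _ = ∑ g ∈ S, g.natDegree := by
            exact Finset.sum_fiberwise_of_maps_to
              (fun g hg => Nat.mem_divisors.mpr ⟨hdegm g hg, hm0⟩) _
        _ = n := h1
    -- pointwise upper bound
    have hbound : ∀ s ∈ m.divisors, s * (A s).card ≤ Nat.totient s * κ := by
      intro s hs
      have hs0 : 0 < s := Nat.pos_of_mem_divisors hs
      set Ds := n.divisors.filter (fun d => d / d.gcd (q - 1) = s) with hDs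
      have hAs : ∀ g ∈ A s, g.Monic ∧ Irreducible g ∧ g ∣ P ∧ g.natDegree = s := by
        intro g hg
        obtain ⟨hgS, hgdeg⟩ := Finset.mem_filter.mp hg
        obtain ⟨h1, h2, h3⟩ := (hmem g).mp hgS
        exact ⟨h1, h2, h3, hgdeg⟩
      have hprodsplit :
          (∏ d ∈ Ds, cyclotomic d F) *
            (∏ d ∈ n.divisors.filter (fun d => ¬(d / d.gcd (q - 1) = s)), cyclotomic d F)
            = P := by
        rw [Finset.prod_filter_mul_prod_filter_not,
          prod_cyclotomic_eq_X_pow_sub_one (by omega) F]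
      have hAP : (∏ g ∈ A s, g) ∣ P := by
        rw [← hprodS]
        exact Finset.prod_dvd_prod_of_subset _ _ _ (Finset.filter_subset _ _)
      have hcop : IsCoprime (∏ g ∈ A s, g)
          (∏ d ∈ n.divisors.filter (fun d => ¬(d / d.gcd (q - 1) = s)), cyclotomic d F) := by
        refine IsCoprime.prod_left fun g hg => ?_
        obtain ⟨hgmon, hgirr, hgP, hgdeg⟩ := hAs g hg
        rw [hgirr.coprime_iff_not_dvd]
        intro hgR
        obtain ⟨d', hd'mem, hgd'⟩ :=
          (UniqueFactorizationMonoid.irreducible_iff_prime.mp hgirr).exists_mem_finset_dvd hgR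
        obtain ⟨hd'n, hd'ne⟩ := Finset.mem_filter.mp hd'mem
        have hd'0 : 0 < d' := Nat.pos_of_mem_divisors hd'n
        have := hcyclo d' hd'0 (Nat.mem_divisors.mp hd'n).1 g hgirr hgd'
        exact hd'ne (by rw [← this, hgdeg])
      have hQdvd : (∏ g ∈ A s, g) ∣ ∏ d ∈ Ds, cyclotomic d F := by
        refine hcop.dvd_of_dvd_mul_right ?_
        rwa [hprodsplit]
      have hQ0 : (∏ d ∈ Ds, cyclotomic d F) ≠ 0 := by
        refine Finset.prod_ne_zero_iff.mpr fun d hd => ?_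
        exact cyclotomic_ne_zero d F
      have hdeg1 : (∏ g ∈ A s, g).natDegree = s * (A s).card := by
        rw [natDegree_prod _ _ fun g hg => (hAs g hg).2.1.ne_zero]
        rw [Finset.sum_congr rfl (fun g hg => (hAs g hg).2.2.2), Finset.sum_const,
          smul_eq_mul, mul_comm]
      have hdeg2 : (∏ d ∈ Ds, cyclotomic d F).natDegree = ∑ d ∈ Ds, Nat.totient d := by
        rw [natDegree_prod _ _ fun d hd => cyclotomic_ne_zero d F]
        exact Finset.sum_congr rfl fun d hd => natDegree_cyclotomic d F
      have hled : (∏ g ∈ A s, g).natDegree ≤ (∏ d ∈ Ds, cyclotomic d F).natDegree :=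
        natDegree_le_of_dvd hQdvd hQ0
      rw [hdeg1, hdeg2] at hled
      calc s * (A s).card ≤ ∑ d ∈ Ds, Nat.totient d := hled
        _ ≤ Nat.totient s * Nat.gcd n (q - 1) := totient_sum_le hq2 (by omega) hs0
        _ = Nat.totient s * κ := by rw [hκ]
    -- sum of targets
    have hsum2 : ∑ s ∈ m.divisors, Nat.totient s * κ = n := by
      rw [← Finset.sum_mul, Nat.sum_totient, mul_comm, hmκ]
    have heq := (Finset.sum_eq_sum_iff_of_le hbound).mp (hsum1.trans hsum2.symm)
    have htfin : t * (A t).card = Nat.totient t * κ :=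
      heq t (Nat.mem_divisors.mpr ⟨htm, hm0⟩)
    rw [← htfin, Nat.mul_div_cancel_left _ (by omega : 0 < t)]
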